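/- With [s]_x = 1 - x^s, T_s = T [s]_x [s+3]_x/([s+1]_x [s+2]_x), T = (1+4x+x^2)/(1+x+x^2), g = x(1+x+x^2)/(1+4x+x^2)^2, X_{s,t} = ([3]_x [s+1]_x [t+1]_x [s+t+3]_x)/([1]_x [s+3]_x [t+3]_x [s+t+1]_x), and Y_{s,t,u} = ([s+3]_x [t+3]_x [u+3]_x [s+t+u+3]_x)/([3]_x [s+t+3]_x [t+u+3]_x [u+s+3]_x), the identity Y_{s,t,u} = 1 + g^3 T_s T_t T_u X_{s+1,t+1} X_{s+1,u+1} X_{t+1,u+1} T_{s+1} T_{t+1} T_{u+1} Y_{s+1,t+1,u+1} holds as an identity of rational functions in x, for all natural numbers s, t, u. -/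
import Mathlib


noncomputable section

/-- The field of rational functions in one variable over ℚ. -/
abbrev K := RatFunc ℚ

/-- The formal variable x. -/
def x : K := RatFunc.X

/-- [s]_x = 1 - x^s. -/
def br (s : ℕ) : K := 1 - x ^ s

/-- T = (1+4x+x²)/(1+x+x²). -/
def T : K := (1 + 4 * x + x ^ 2) / (1 + x + x ^ 2)

/-- g = x(1+x+x²)/(1+4x+x²)². -/
def g : K := x * (1 + x + x ^ 2) / (1 + 4 * x + x ^ 2) ^ 2

/-- T_s = T [s]_x [s+3]_x / ([s+1]_x [s+2]_x). -/
def Ts (s : ℕ) : K := T * br s * br (s + 3) / (br (s + 1) * br (s + 2))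

/-- N_{s,t}. -/
def N (s t : ℕ) : K :=
  br 3 * br (s + 2) * br (t + 2) * br (s + t + 3) /
    (br 2 * br (s + 3) * br (t + 3) * br (s + t + 2))

/-- X_{s,t}. -/
def Xc (s t : ℕ) : K :=
  br 3 * br (s + 1) * br (t + 1) * br (s + t + 3) /
    (br 1 * br (s + 3) * br (t + 3) * br (s + t + 1))

/-- Y_{s,t,u}. -/
def Y (s t u : ℕ) : K :=
  br (s + 3) * br (t + 3) * br (u + 3) * br (s + t + u + 3) /
    (br 3 * br (s + t + 3) * br (t + u + 3) * br (u + s + 3))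

lemma alg_inj : Function.Injective (algebraMap (Polynomial ℚ) K) :=
  RatFunc.algebraMap_injective ℚ

lemma poly_ne {p : Polynomial ℚ} (h : p ≠ 0) : algebraMap (Polynomial ℚ) K p ≠ 0 := by
  intro h0; exact h (alg_inj (by simpa using h0))

lemma br_ne {n : ℕ} (h : n ≠ 0) : br n ≠ 0 := by
  have e : br n = algebraMap (Polynomial ℚ) K (1 - Polynomial.X ^ n) := by
    simp [br, x, RatFunc.algebraMap_X, map_sub, map_pow]
  rw [e]
  apply poly_ne
  intro h0
  have := congrArg Polynomial.natDegree (sub_eq_zero.mp h0).symm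
  simp [Polynomial.natDegree_X_pow] at this
  omega

lemma q1_ne : (1 + x + x ^ 2 : K) ≠ 0 := by
  have e : (1 + x + x ^ 2 : K) = algebraMap (Polynomial ℚ) K (1 + Polynomial.X + Polynomial.X ^ 2) := by
    simp [x, RatFunc.algebraMap_X]
  rw [e]; apply poly_ne; intro h0
  have := congrArg (Polynomial.coeff · 0) h0; simp at this

lemma q4_ne : (1 + 4 * x + x ^ 2 : K) ≠ 0 := by
  have e : (1 + 4 * x + x ^ 2 : K) = algebraMap (Polynomial ℚ) K (1 + 4 * Polynomial.X + Polynomial.X ^ 2) := by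
    simp [x, RatFunc.algebraMap_X, map_ofNat]
  rw [e]; apply poly_ne; intro h0
  have := congrArg (Polynomial.coeff · 0) h0; simp at this

lemma br3_eq : br 3 = br 1 * (1 + x + x ^ 2) := by
  simp only [br]; ring

/-- the key polynomial identity -/
lemma key (s t u : ℕ) :
    br (s + 3) * br (t + 3) * br (u + 3) * br (s + t + u + 3)
      = br 3 * br (s + t + 3) * br (t + u + 3) * br (u + s + 3)
        + x ^ 3 * br s * br t * br u * br (s + t + u + 6) := by
  simp only [br, pow_add]
  ring

set_option maxHeartbeats 2000000 in
/-- the telescoped right-hand product -/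
lemma rhs_eq (s t u : ℕ) :
    g ^ 3 * Ts s * Ts t * Ts u
      * Xc (s + 1) (t + 1) * Xc (s + 1) (u + 1) * Xc (t + 1) (u + 1)
      * Ts (s + 1) * Ts (t + 1) * Ts (u + 1) * Y (s + 1) (t + 1) (u + 1)
      = x ^ 3 * br s * br t * br u * br (s + t + u + 6) /
          (br 3 * br (s + t + 3) * br (t + u + 3) * br (u + s + 3)) := by
  have b1 : br 1 ≠ 0 := br_ne (by omega)
  have hs1 : br (s + 1) ≠ 0 := br_ne (by omega)
  have hs2 : br (s + 2) ≠ 0 := br_ne (by omega)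
  have hs3 : br (s + 3) ≠ 0 := br_ne (by omega)
  have hs4 : br (s + 4) ≠ 0 := br_ne (by omega)
  have ht1 : br (t + 1) ≠ 0 := br_ne (by omega)
  have ht2 : br (t + 2) ≠ 0 := br_ne (by omega)
  have ht3 : br (t + 3) ≠ 0 := br_ne (by omega)
  have ht4 : br (t + 4) ≠ 0 := br_ne (by omega)
  have hu1 : br (u + 1) ≠ 0 := br_ne (by omega)
  have hu2 : br (u + 2) ≠ 0 := br_ne (by omega)
  have hu3 : br (u + 3) ≠ 0 := br_ne (by omega)
  have hu4 : br (u + 4) ≠ 0 := br_ne (by omega)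
  have hst3 : br (s + t + 3) ≠ 0 := br_ne (by omega)
  have htu3 : br (t + u + 3) ≠ 0 := br_ne (by omega)
  have hus3 : br (u + s + 3) ≠ 0 := br_ne (by omega)
  have hst5 : br (s + t + 5) ≠ 0 := br_ne (by omega)
  have htu5 : br (t + u + 5) ≠ 0 := br_ne (by omega)
  have hus5 : br (u + s + 5) ≠ 0 := br_ne (by omega)
  have hq1 := q1_ne
  have hq4 := q4_ne
  rw [Ts, Ts, Ts, Ts, Ts, Ts, Xc, Xc, Xc, T, g, Y]
  simp only [br3_eq, show s+1+(t+1)+3 = s+t+5 from by ring, show s+1+(u+1)+3 = u+s+5 from by ring,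
    show t+1+(u+1)+3 = t+u+5 from by ring, show s+1+(t+1)+1 = s+t+3 from by ring,
    show s+1+(u+1)+1 = u+s+3 from by ring, show t+1+(u+1)+1 = t+u+3 from by ring,
    show s+1+3 = s+4 from rfl, show t+1+3 = t+4 from rfl, show u+1+3 = u+4 from rfl,
    show s+1+1 = s+2 from rfl, show t+1+1 = t+2 from rfl, show u+1+1 = u+2 from rfl,
    show s+1+2 = s+3 from rfl, show t+1+2 = t+3 from rfl, show u+1+2 = u+3 from rfl,
    show s+1+(t+1)+(u+1)+3 = s+t+u+6 from by ring,
    show u+1+(s+1)+3 = u+s+5 from by ring, show t+1+(u+1)+3 = t+u+5 from by ring]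
  -- make all br terms opaque atoms
  generalize (1 + x + x ^ 2 : K) = P at *
  generalize (1 + 4 * x + x ^ 2 : K) = Q at *
  generalize br s = As at *
  generalize br t = At at *
  generalize br u = Au at *
  generalize br 1 = B1 at *
  generalize br (s+1) = As1 at *
  generalize br (s+2) = As2 at *
  generalize br (s+3) = As3 at *
  generalize br (s+4) = As4 at *
  generalize br (t+1) = At1 at *
  generalize br (t+2) = At2 at *
  generalize br (t+3) = At3 at *
  generalize br (t+4) = At4 at *
  generalize br (u+1) = Au1 at *
  generalize br (u+2) = Au2 at *
  generalize br (u+3) = Au3 at *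
  generalize br (u+4) = Au4 at *
  generalize br (s+t+3) = Cst3 at *
  generalize br (t+u+3) = Ctu3 at *
  generalize br (u+s+3) = Cus3 at *
  generalize br (s+t+5) = Cst5 at *
  generalize br (t+u+5) = Ctu5 at *
  generalize br (u+s+5) = Cus5 at *
  generalize br (s+t+u+6) = E at *
  simp only [div_pow, div_mul_div_comm, div_mul_eq_mul_div, mul_div_assoc', div_div]
  rw [div_eq_div_iff]
  · ring
  · repeat' first | apply mul_ne_zero | apply pow_ne_zero
    all_goals first | assumption | simp [npowRec]
  · repeat' first | apply mul_ne_zero | apply pow_ne_zero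
    all_goals first | assumption | simp [npowRec]

set_option maxHeartbeats 1000000 in
theorem Y_recursion (s t u : ℕ) :
    Y s t u = 1 + g ^ 3 * Ts s * Ts t * Ts u
      * Xc (s + 1) (t + 1) * Xc (s + 1) (u + 1) * Xc (t + 1) (u + 1)
      * Ts (s + 1) * Ts (t + 1) * Ts (u + 1) * Y (s + 1) (t + 1) (u + 1) := by
  have hD : br 3 * br (s + t + 3) * br (t + u + 3) * br (u + s + 3) ≠ 0 :=
    mul_ne_zero (mul_ne_zero (mul_ne_zero (br_ne (by omega)) (br_ne (by omega)))
      (br_ne (by omega))) (br_ne (by omega))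
  rw [rhs_eq, Y, key s t u, add_div, div_self hD]
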